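/- Let A = diag(−3, 2, 4, 10) acting on ℝ⁴, let Φ_t := exp(tA) = diag(e^{−3t}, e^{2t}, e^{4t}, e^{10t}), let E := span{e₁} and F := span{e₂, e₃, e₄}, where e₁,…,e₄ is the standard basis. Then: (i) the splitting E ⊕ F is dominated for Φ, i.e. there exist K, λ > 0 with ‖Φ_t|_E‖ · ‖Φ_{−t}|_F‖ ≤ K·e^{−λt} for all t ≥ 0; but (ii) in the exterior square Λ²ℝ⁴, with Ẽ := span{e₁∧e₂, e₁∧e₃, e₁∧e₄} and F̃ := span{e₂∧e₃, e₂∧e₄, e₃∧e₄}, the splitting Ẽ ⊕ F̃ is NOT dominated for the induced maps Λ²Φ_t: there exist no K, λ > 0 with ‖(Λ²Φ_t)|_{Ẽ}‖ · ‖(Λ²Φ_{−t})|_{F̃}‖ ≤ K·e^{−λt} for all t ≥ 0. -/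

import Mathlib

set_option synthInstance.maxHeartbeats 1000000
set_option maxHeartbeats 1000000


noncomputable section

/-- Index set for the standard basis of the `k`-th exterior power of `ℝⁿ`:
`k`-element subsets of `Fin n`. -/
abbrev ExtIdx (n k : ℕ) := {s : Finset (Fin n) // s.card = k}

/-- The increasing enumeration of a `k`-element subset of `Fin n`. -/
def extEmb {n k : ℕ} (s : ExtIdx n k) : Fin k → Fin n :=
  fun i => s.1.orderIsoOfFin s.2 i

/-- The wedge product `v 0 ∧ ⋯ ∧ v (k-1)` of `k` vectors of `ℝⁿ`, realized in the concrete
model `Λᵏℝⁿ = EuclideanSpace ℝ (ExtIdx n k)` via its Plücker (minor) coordinates. -/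
def wedge {n k : ℕ} (v : Fin k → EuclideanSpace ℝ (Fin n)) :
    EuclideanSpace ℝ (ExtIdx n k) :=
  WithLp.toLp 2 (fun s => Matrix.det (Matrix.of fun i j => v j (extEmb s i)))

/-- The matrix of a continuous linear map on `ℝⁿ` in the standard basis. -/
def matOf {n : ℕ} (A : EuclideanSpace ℝ (Fin n) →L[ℝ] EuclideanSpace ℝ (Fin n)) :
    Matrix (Fin n) (Fin n) ℝ :=
  Matrix.of fun i j => A (EuclideanSpace.single j 1) i

/-- The induced linear map `Λᵏ A` on the `k`-th exterior power, in the concrete model: its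
matrix is the `k`-th compound matrix of the matrix of `A`, so that
`(Λᵏ A)(u₁ ∧ ⋯ ∧ u_k) = A u₁ ∧ ⋯ ∧ A u_k`. -/
def extPow {n : ℕ} (k : ℕ)
    (A : EuclideanSpace ℝ (Fin n) →L[ℝ] EuclideanSpace ℝ (Fin n)) :
    EuclideanSpace ℝ (ExtIdx n k) →L[ℝ] EuclideanSpace ℝ (ExtIdx n k) :=
  LinearMap.toContinuousLinearMap
    (Matrix.toEuclideanLin
      (Matrix.of fun s t : ExtIdx n k => ((matOf A).submatrix (extEmb s) (extEmb t)).det))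

/-- Operator norm of the restriction `A|_W` of `A` to a subspace `W`. -/
def restNorm {V : Type*} [NormedAddCommGroup V] [NormedSpace ℝ V]
    (A : V →L[ℝ] V) (W : Submodule ℝ V) : ℝ :=
  ‖A.comp W.subtypeL‖

/-- The time-`t` map `Φ_t = exp(tA) = diag(e^{-3t}, e^{2t}, e^{4t}, e^{10t})` of the linear
flow on `ℝ⁴` generated by `A = diag(-3, 2, 4, 10)`. -/
def PhiT (t : ℝ) : EuclideanSpace ℝ (Fin 4) →L[ℝ] EuclideanSpace ℝ (Fin 4) :=
  LinearMap.toContinuousLinearMap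
    (Matrix.toEuclideanLin
      (Matrix.diagonal
        ![Real.exp (-3 * t), Real.exp (2 * t), Real.exp (4 * t), Real.exp (10 * t)]))

/-- `e i` is the `i`-th standard basis vector of `ℝ⁴`. -/
def stdb (i : Fin 4) : EuclideanSpace ℝ (Fin 4) := EuclideanSpace.single i 1


def dvec (t : ℝ) : Fin 4 → ℝ :=
  ![Real.exp (-3 * t), Real.exp (2 * t), Real.exp (4 * t), Real.exp (10 * t)]

lemma phiT_apply (t : ℝ) (x : EuclideanSpace ℝ (Fin 4)) (i : Fin 4) :
    PhiT t x i = dvec t i * x i := by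
  simp [PhiT, dvec, Matrix.toEuclideanLin_apply, Matrix.mulVec_diagonal]

lemma matOf_phiT (t : ℝ) : matOf (PhiT t) = Matrix.diagonal (dvec t) := by
  ext i j
  by_cases h : i = j <;>
    simp [matOf, phiT_apply, EuclideanSpace.single_apply, Matrix.diagonal, h]

lemma extEmb_pair {a b : Fin 4} (hab : a < b) (h : ({a,b} : Finset (Fin 4)).card = 2) :
    extEmb (⟨{a,b}, h⟩ : ExtIdx 4 2) = ![a,b] := by
  have key : ![a,b] = ({a,b} : Finset (Fin 4)).orderEmbOfFin h := by
    apply Finset.orderEmbOfFin_unique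
    · intro x; fin_cases x <;> simp
    · intro i j hij
      fin_cases i <;> fin_cases j <;> simp_all
  funext i
  have : extEmb (⟨{a,b}, h⟩ : ExtIdx 4 2) i = ({a,b} : Finset (Fin 4)).orderEmbOfFin h i :=
    Finset.coe_orderIsoOfFin_apply _ _ _
  rw [this, ← key]

lemma sixcases (s : ExtIdx 4 2) : s = ⟨{0,1}, by decide⟩ ∨ s = ⟨{0,2}, by decide⟩ ∨
    s = ⟨{0,3}, by decide⟩ ∨ s = ⟨{1,2}, by decide⟩ ∨ s = ⟨{1,3}, by decide⟩ ∨
    s = ⟨{2,3}, by decide⟩ := by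
  obtain ⟨s, hs⟩ := s
  simp only [Subtype.mk.injEq]
  revert hs; revert s; decide

lemma wedge_pair {a b : Fin 4} (hab : a < b) (h : ({a,b} : Finset (Fin 4)).card = 2) :
    wedge ![stdb a, stdb b] = EuclideanSpace.single (⟨{a,b}, h⟩ : ExtIdx 4 2) 1 := by
  ext s
  rcases sixcases s with rfl|rfl|rfl|rfl|rfl|rfl <;>
  · rw [wedge, WithLp.ofLp_toLp]
    rw [Matrix.det_fin_two]
    rw [extEmb_pair (by decide)]
    simp only [Matrix.of_apply, Matrix.cons_val_zero, Matrix.cons_val_one, Matrix.head_cons,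
      stdb, EuclideanSpace.single_apply]
    fin_cases a <;> fin_cases b <;>
      first
        | exact absurd hab (by decide)
        | simp (config := { decide := true }) [Subtype.mk.injEq]

lemma extPow_apply (t : ℝ) (y : EuclideanSpace ℝ (ExtIdx 4 2)) (s : ExtIdx 4 2) :
    extPow 2 (PhiT t) y s =
      ∑ τ : ExtIdx 4 2,
        ((Matrix.diagonal (dvec t)).submatrix (extEmb s) (extEmb τ)).det * y τ := by
  simp [extPow, matOf_phiT, Matrix.toEuclideanLin_apply, Matrix.mulVec, dotProduct]

lemma extPow_single (t : ℝ) {a b : Fin 4} (hab : a < b)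
    (h : ({a,b} : Finset (Fin 4)).card = 2) :
    extPow 2 (PhiT t) (EuclideanSpace.single (⟨{a,b}, h⟩ : ExtIdx 4 2) 1) =
      EuclideanSpace.single (⟨{a,b}, h⟩ : ExtIdx 4 2) (dvec t a * dvec t b) := by
  ext s
  rw [extPow_apply]
  rw [show (EuclideanSpace.single (⟨{a,b}, h⟩ : ExtIdx 4 2)
      (dvec t a * dvec t b)) s = if s = ⟨{a,b}, h⟩ then dvec t a * dvec t b else 0 from
    EuclideanSpace.single_apply _ _ _]
  rw [Finset.sum_eq_single (⟨{a,b}, h⟩ : ExtIdx 4 2)]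
  · rw [EuclideanSpace.single_apply, if_pos rfl, mul_one, extEmb_pair hab]
    rcases sixcases s with rfl|rfl|rfl|rfl|rfl|rfl <;>
    · rw [extEmb_pair (by decide), Matrix.det_fin_two]
      simp only [Matrix.submatrix_apply, Matrix.diagonal, Matrix.of_apply,
        Matrix.cons_val_zero, Matrix.cons_val_one, Matrix.head_cons]
      fin_cases a <;> fin_cases b <;>
        first
          | exact absurd hab (by decide)
          | simp (config := { decide := true }) [Subtype.mk.injEq]
  · intro τ _ hτ
    rw [EuclideanSpace.single_apply, if_neg hτ, mul_zero]
  · intro hmem; exact absurd (Finset.mem_univ _) hmem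

lemma mem_F_coord {x : EuclideanSpace ℝ (Fin 4)}
    (hx : x ∈ Submodule.span ℝ {stdb 1, stdb 2, stdb 3}) : x 0 = 0 := by
  let π : EuclideanSpace ℝ (Fin 4) →ₗ[ℝ] ℝ :=
    { toFun := fun y => y 0, map_add' := fun _ _ => rfl, map_smul' := fun _ _ => rfl }
  have hle : Submodule.span ℝ {stdb 1, stdb 2, stdb 3} ≤ LinearMap.ker π := by
    rw [Submodule.span_le]
    rintro v (rfl | rfl | rfl)
    · exact (by simp [stdb, EuclideanSpace.single_apply] : (stdb 1 : EuclideanSpace ℝ (Fin 4)) 0 = 0)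
    · exact (by simp [stdb, EuclideanSpace.single_apply] : (stdb 2 : EuclideanSpace ℝ (Fin 4)) 0 = 0)
    · exact (by simp [stdb, EuclideanSpace.single_apply] : (stdb 3 : EuclideanSpace ℝ (Fin 4)) 0 = 0)
  exact hle hx

lemma restE (t : ℝ) :
    restNorm (PhiT t) (Submodule.span ℝ {stdb 0}) ≤ Real.exp (-3 * t) := by
  apply ContinuousLinearMap.opNorm_le_bound _ (Real.exp_nonneg _)
  rintro ⟨x, hx⟩
  obtain ⟨c, rfl⟩ := Submodule.mem_span_singleton.1 hx
  show ‖PhiT t (c • stdb 0)‖ ≤ Real.exp (-3 * t) * ‖c • stdb 0‖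
  have him : PhiT t (stdb 0) = Real.exp (-3 * t) • stdb 0 := by
    ext j
    rw [phiT_apply]
    by_cases hj : j = 0 <;>
      simp [hj, stdb, EuclideanSpace.single_apply, dvec]
  rw [map_smul, him, norm_smul, norm_smul, norm_smul]
  simp [stdb, EuclideanSpace.norm_single, Real.norm_eq_abs,
    abs_of_pos (Real.exp_pos (-3 * t))]
  ring_nf
  exact le_refl _

lemma sqrt_ineq (t x1 x2 x3 : ℝ) (ht : 0 ≤ t) :
    Real.sqrt ((Real.exp (2 * -t) * x1)^2 + (Real.exp (4 * -t) * x2)^2 +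
        (Real.exp (10 * -t) * x3)^2) ≤
      Real.exp (-2 * t) * Real.sqrt (x1^2 + x2^2 + x3^2) := by
  conv_rhs => rw [← Real.sqrt_sq (Real.exp_nonneg (-2 * t)), ← Real.sqrt_mul (sq_nonneg _)]
  apply Real.sqrt_le_sqrt
  have h1 : Real.exp (2 * -t) = Real.exp (-2 * t) := by ring_nf
  have h2 : Real.exp (4 * -t) ≤ Real.exp (-2 * t) := Real.exp_le_exp.2 (by linarith)
  have h3 : Real.exp (10 * -t) ≤ Real.exp (-2 * t) := Real.exp_le_exp.2 (by linarith)
  have e2 : (Real.exp (4 * -t))^2 ≤ (Real.exp (-2 * t))^2 :=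
    pow_le_pow_left₀ (Real.exp_nonneg _) h2 2
  have e3 : (Real.exp (10 * -t))^2 ≤ (Real.exp (-2 * t))^2 :=
    pow_le_pow_left₀ (Real.exp_nonneg _) h3 2
  rw [mul_pow, mul_pow, mul_pow, h1]
  nlinarith [mul_le_mul_of_nonneg_right e2 (sq_nonneg x2),
    mul_le_mul_of_nonneg_right e3 (sq_nonneg x3), sq_nonneg x1]

lemma restF (t : ℝ) (ht : 0 ≤ t) :
    restNorm (PhiT (-t)) (Submodule.span ℝ {stdb 1, stdb 2, stdb 3}) ≤ Real.exp (-2 * t) := by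
  apply ContinuousLinearMap.opNorm_le_bound _ (Real.exp_nonneg _)
  rintro ⟨x, hx⟩
  have h0 : x 0 = 0 := mem_F_coord hx
  show ‖PhiT (-t) x‖ ≤ Real.exp (-2 * t) * ‖x‖
  rw [EuclideanSpace.norm_eq, EuclideanSpace.norm_eq]
  simp only [Fin.sum_univ_four, Real.norm_eq_abs, sq_abs, phiT_apply, h0, mul_zero, dvec,
    Matrix.cons_val_zero, Matrix.cons_val_one, Matrix.head_cons, Matrix.cons_val_two,
    Matrix.tail_cons, Matrix.cons_val_three]
  simp only [ne_eq, OfNat.ofNat_ne_zero, not_false_eq_true, zero_pow, zero_add]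
  exact sqrt_ineq t (x 1) (x 2) (x 3) ht

lemma restNorm_nonneg {V : Type*} [NormedAddCommGroup V] [NormedSpace ℝ V]
    (A : V →L[ℝ] V) (W : Submodule ℝ V) : 0 ≤ restNorm A W := by
  unfold restNorm; exact norm_nonneg (A.comp W.subtypeL)

/-- **Example 1.12.** For `Φ_t = exp(tA)` with `A = diag(-3, 2, 4, 10)` on `ℝ⁴`, the
splitting `E ⊕ F` with `E = span{e₁}`, `F = span{e₂, e₃, e₄}` is dominated, but the induced
splitting `Ẽ ⊕ F̃` of the exterior square, with `Ẽ = span{e₁∧e₂, e₁∧e₃, e₁∧e₄}` and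
`F̃ = span{e₂∧e₃, e₂∧e₄, e₃∧e₄}`, is NOT dominated for the induced maps `Λ²Φ_t`. -/
theorem stmt_17 :
    (∃ K : ℝ, 0 < K ∧ ∃ lam : ℝ, 0 < lam ∧ ∀ t : ℝ, 0 ≤ t →
      restNorm (PhiT t) (Submodule.span ℝ {stdb 0}) *
        restNorm (PhiT (-t)) (Submodule.span ℝ {stdb 1, stdb 2, stdb 3}) ≤
        K * Real.exp (-lam * t)) ∧
    ¬(∃ K : ℝ, 0 < K ∧ ∃ lam : ℝ, 0 < lam ∧ ∀ t : ℝ, 0 ≤ t →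
      restNorm (extPow 2 (PhiT t))
          (Submodule.span ℝ
            {wedge ![stdb 0, stdb 1], wedge ![stdb 0, stdb 2], wedge ![stdb 0, stdb 3]}) *
        restNorm (extPow 2 (PhiT (-t)))
          (Submodule.span ℝ
            {wedge ![stdb 1, stdb 2], wedge ![stdb 1, stdb 3], wedge ![stdb 2, stdb 3]}) ≤
        K * Real.exp (-lam * t)) := by
  constructor
  · refine ⟨1, one_pos, 5, by norm_num, fun t ht => ?_⟩
    have h := mul_le_mul (restE t) (restF t ht) (restNorm_nonneg _ _) (Real.exp_nonneg _)
    refine h.trans (le_of_eq ?_)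
    rw [← Real.exp_add, one_mul]
    ring_nf
  · rintro ⟨K, hK, lam, hlam, hb⟩
    set t := max 1 (Real.log K + 1) with htdef
    have ht0 : (0:ℝ) ≤ t := le_trans zero_le_one (le_max_left _ _)
    have h03 : ({0,3} : Finset (Fin 4)).card = 2 := by decide
    have h12 : ({1,2} : Finset (Fin 4)).card = 2 := by decide
    set W1 := Submodule.span ℝ
      {wedge ![stdb 0, stdb 1], wedge ![stdb 0, stdb 2], wedge ![stdb 0, stdb 3]} with hW1
    set W2 := Submodule.span ℝ
      {wedge ![stdb 1, stdb 2], wedge ![stdb 1, stdb 3], wedge ![stdb 2, stdb 3]} with hW2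
    have hm1 : wedge ![stdb 0, stdb 3] ∈ W1 := Submodule.subset_span (by simp)
    have hm2 : wedge ![stdb 1, stdb 2] ∈ W2 := Submodule.subset_span (by simp)
    have hnw1 : ‖wedge ![stdb 0, stdb 3]‖ = 1 := by
      rw [wedge_pair (by decide) h03, EuclideanSpace.norm_single]; norm_num
    have hnw2 : ‖wedge ![stdb 1, stdb 2]‖ = 1 := by
      rw [wedge_pair (by decide) h12, EuclideanSpace.norm_single]; norm_num
    have key1 : ‖extPow 2 (PhiT t) (wedge ![stdb 0, stdb 3])‖ =
        Real.exp (-3 * t) * Real.exp (10 * t) := by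
      rw [wedge_pair (by decide) h03, extPow_single t (by decide) h03,
        EuclideanSpace.norm_single]
      simp only [dvec, Matrix.cons_val_zero, Matrix.cons_val_three, Matrix.tail_cons,
        Matrix.head_cons, Matrix.cons_val_one, Matrix.cons_val_two]
      rw [Real.norm_eq_abs, abs_of_pos (by positivity)]
    have key2 : ‖extPow 2 (PhiT (-t)) (wedge ![stdb 1, stdb 2])‖ =
        Real.exp (2 * -t) * Real.exp (4 * -t) := by
      rw [wedge_pair (by decide) h12, extPow_single (-t) (by decide) h12,
        EuclideanSpace.norm_single]
      simp only [dvec, Matrix.cons_val_zero, Matrix.cons_val_three, Matrix.tail_cons,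
        Matrix.head_cons, Matrix.cons_val_one, Matrix.cons_val_two]
      rw [Real.norm_eq_abs, abs_of_pos (by positivity)]
    have hle1 : Real.exp (-3 * t) * Real.exp (10 * t) ≤ restNorm (extPow 2 (PhiT t)) W1 := by
      calc Real.exp (-3 * t) * Real.exp (10 * t)
          = ‖extPow 2 (PhiT t) (wedge ![stdb 0, stdb 3])‖ := key1.symm
        _ = ‖((extPow 2 (PhiT t)).comp W1.subtypeL) ⟨wedge ![stdb 0, stdb 3], hm1⟩‖ := rfl
        _ ≤ ‖(extPow 2 (PhiT t)).comp W1.subtypeL‖ *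
              ‖(⟨wedge ![stdb 0, stdb 3], hm1⟩ : W1)‖ := ContinuousLinearMap.le_opNorm _ _
        _ = restNorm (extPow 2 (PhiT t)) W1 := by
            rw [show ‖(⟨wedge ![stdb 0, stdb 3], hm1⟩ : W1)‖ = ‖wedge ![stdb 0, stdb 3]‖
              from rfl, hnw1, mul_one]; rfl
    have hle2 : Real.exp (2 * -t) * Real.exp (4 * -t) ≤
        restNorm (extPow 2 (PhiT (-t))) W2 := by
      calc Real.exp (2 * -t) * Real.exp (4 * -t)
          = ‖extPow 2 (PhiT (-t)) (wedge ![stdb 1, stdb 2])‖ := key2.symm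
        _ = ‖((extPow 2 (PhiT (-t))).comp W2.subtypeL) ⟨wedge ![stdb 1, stdb 2], hm2⟩‖ := rfl
        _ ≤ ‖(extPow 2 (PhiT (-t))).comp W2.subtypeL‖ *
              ‖(⟨wedge ![stdb 1, stdb 2], hm2⟩ : W2)‖ := ContinuousLinearMap.le_opNorm _ _
        _ = restNorm (extPow 2 (PhiT (-t))) W2 := by
            rw [show ‖(⟨wedge ![stdb 1, stdb 2], hm2⟩ : W2)‖ = ‖wedge ![stdb 1, stdb 2]‖
              from rfl, hnw2, mul_one]; rfl
    have hprod : Real.exp t ≤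
        restNorm (extPow 2 (PhiT t)) W1 * restNorm (extPow 2 (PhiT (-t))) W2 := by
      have h := mul_le_mul hle1 hle2 (by positivity) (restNorm_nonneg _ _)
      refine le_trans (le_of_eq ?_) h
      rw [← Real.exp_add, ← Real.exp_add, ← Real.exp_add]
      congr 1; ring
    have hfin := hb t ht0
    have h1 : Real.exp t ≤ K * Real.exp (-lam * t) := hprod.trans hfin
    have h2 : K * Real.exp (-lam * t) ≤ K := by
      nth_rewrite 2 [← mul_one K]
      refine mul_le_mul_of_nonneg_left (Real.exp_le_one_iff.2 ?_) hK.le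
      nlinarith [mul_nonneg hlam.le ht0]
    have h3 : K < Real.exp t := by
      calc K = Real.exp (Real.log K) := (Real.exp_log hK).symm
        _ < Real.exp t := Real.exp_lt_exp.2
            (lt_of_lt_of_le (by linarith) (le_max_right 1 (Real.log K + 1)))
    linarith
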